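/- arXiv:2012.11258 — 2 statements merged into one kernel-verified Lean document; each statement's English description precedes it below -/
import Mathlib

section
/- The expected difference-rewards policy gradient equals the expected distributed policy gradient: E_{a∼π_θ(·|s)}[ΔR^i(a^i|s,a^{-i})·∇_{θ^i} log π_{θ^i}(a^i|s)] = E_{a∼π_θ(·|s)}[R(s,a)·∇_{θ^i} log π_{θ^i}(a^i|s)], where ΔR^i(a^i|s,a^{-i}) = R(s,a) − ∑_{b^i} π_{θ^i}(b^i|s) R(s,⟨a^{-i},b^i⟩) is the aristocrat-utility difference reward. -/
lemma update_piSplitAt_symm {N : ℕ} {A : Fin N → Type*} (i : Fin N)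
    (x bi : A i) (r : ∀ j : {j // j ≠ i}, A j) :
    Function.update ((Equiv.piSplitAt i A).symm (x, r)) i bi
      = (Equiv.piSplitAt i A).symm (bi, r) := by
  funext j
  by_cases h : j = i
  · subst h; simp [Equiv.piSplitAt]
  · simp [Function.update_of_ne h, Equiv.piSplitAt, h]

/-- The expected difference-rewards policy gradient equals the expected
distributed policy gradient, where the difference reward uses the
aristocrat utility. -/
theorem diff_rewards_pg_eq_distributed_pg {S : Type*} {N : ℕ}
    {A : Fin N → Type*} [∀ j, Fintype (A j)]
    (π : (j : Fin N) → ℝ → S → A j → ℝ) (θ : Fin N → ℝ)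
    (R : S → (∀ j, A j) → ℝ) (i : Fin N) (s : S)
    (hdiff : ∀ j aj, DifferentiableAt ℝ (fun t => π j t s aj) (θ j))
    (hpos : ∀ j t aj, 0 < π j t s aj)
    (hsum : ∀ j t, ∑ aj, π j t s aj = 1) :
    ∑ a : ∀ j, A j, (∏ j, π j (θ j) s (a j)) *
      ((R s a - ∑ bi, π i (θ i) s bi * R s (Function.update a i bi)) *
        deriv (fun t => Real.log (π i t s (a i))) (θ i))
    = ∑ a : ∀ j, A j, (∏ j, π j (θ j) s (a j)) *
        (R s a * deriv (fun t => Real.log (π i t s (a i))) (θ i)) := by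
  classical
  set p : A i → ℝ := fun ai => π i (θ i) s ai with hp
  set d : A i → ℝ := fun ai => deriv (fun t => π i t s ai) (θ i) with hd
  have hlog : ∀ ai : A i,
      deriv (fun t => Real.log (π i t s ai)) (θ i) = d ai / p ai := fun ai =>
    (((hdiff i ai).hasDerivAt).log (hpos i (θ i) ai).ne').deriv
  have hd0 : ∑ ai, d ai = 0 := by
    have h1 : deriv (fun t => ∑ ai, π i t s ai) (θ i) = ∑ ai, d ai :=
      deriv_fun_sum (fun ai _ => hdiff i ai)
    have h2 : (fun t => ∑ ai, π i t s ai) = fun _ => (1 : ℝ) := by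
      funext t; exact hsum i t
    rw [h2, deriv_const] at h1
    exact h1.symm
  have key : ∑ a : ∀ j, A j, (∏ j, π j (θ j) s (a j)) *
      ((∑ bi, π i (θ i) s bi * R s (Function.update a i bi)) *
        deriv (fun t => Real.log (π i t s (a i))) (θ i)) = 0 := by
    have hterm : ∀ a : ∀ j, A j,
        (∏ j, π j (θ j) s (a j)) *
          ((∑ bi, π i (θ i) s bi * R s (Function.update a i bi)) *
            deriv (fun t => Real.log (π i t s (a i))) (θ i))
        = (∏ j : {j // j ≠ i}, π j (θ j) s (a j)) *
            (∑ bi, p bi * R s (Function.update a i bi)) * d (a i) := by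
      intro a
      have hsplit : (∏ j : {j // j ≠ i}, π (j : Fin N) (θ j) s (a j))
          = ∏ j ∈ ({i}ᶜ : Finset (Fin N)), π j (θ j) s (a j) :=
        by symm; apply Finset.prod_subtype; intro j; simp
      rw [hlog (a i), Fintype.prod_eq_mul_prod_compl i (fun j => π j (θ j) s (a j)), hsplit]
      have hne : p (a i) ≠ 0 := (hpos i (θ i) (a i)).ne'
      field_simp [hp]
      ring
    simp only [hterm]
    rw [← Equiv.sum_comp (Equiv.piSplitAt i A).symm]
    rw [Fintype.sum_prod_type]
    rw [Finset.sum_comm]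
    apply Finset.sum_eq_zero
    intro r _
    have hri : ∀ x : A i, ((Equiv.piSplitAt i A).symm (x, r)) i = x := by
      intro x; simp [Equiv.piSplitAt]
    have hrj : ∀ (x : A i) (j : {j // j ≠ i}),
        ((Equiv.piSplitAt i A).symm (x, r)) j = r j := by
      intro x j; simp [Equiv.piSplitAt, j.2]
    have : ∀ x : A i,
        (∏ j : {j // j ≠ i}, π j (θ j) s (((Equiv.piSplitAt i A).symm (x, r)) j)) *
          (∑ bi, p bi * R s (Function.update ((Equiv.piSplitAt i A).symm (x, r)) i bi)) *
          d (((Equiv.piSplitAt i A).symm (x, r)) i)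
        = ((∏ j : {j // j ≠ i}, π j (θ j) s (r j)) *
            (∑ bi, p bi * R s ((Equiv.piSplitAt i A).symm (bi, r)))) * d x := by
      intro x
      rw [hri x]
      congr 1
      congr 1
      · exact Finset.prod_congr rfl (fun j _ => by rw [hrj x j])
      · exact Finset.sum_congr rfl (fun bi _ => by rw [update_piSplitAt_symm])
    simp only [this]
    rw [← Finset.mul_sum, hd0, mul_zero]
  calc ∑ a : ∀ j, A j, (∏ j, π j (θ j) s (a j)) *
      ((R s a - ∑ bi, π i (θ i) s bi * R s (Function.update a i bi)) *
        deriv (fun t => Real.log (π i t s (a i))) (θ i))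
      = ∑ a : ∀ j, A j, ((∏ j, π j (θ j) s (a j)) *
          (R s a * deriv (fun t => Real.log (π i t s (a i))) (θ i))
        - (∏ j, π j (θ j) s (a j)) *
          ((∑ bi, π i (θ i) s bi * R s (Function.update a i bi)) *
            deriv (fun t => Real.log (π i t s (a i))) (θ i))) := by
        apply Finset.sum_congr rfl; intro a _; ring
    _ = _ := by rw [Finset.sum_sub_distrib, key, sub_zero]
end

section
/- The sum over agents of the expected difference-rewards update targets equals the expected joint (centralized) policy gradient update: with θ = ⟨θ^1,…,θ^N⟩ and independent per-agent policies, E_{a∼π_θ(·|s)}[ (ΔR^1(a^1|s,a^{-1})∇_{θ^1}log π_{θ^1}(a^1|s), …, ΔR^N(a^N|s,a^{-N})∇_{θ^N}log π_{θ^N}(a^N|s)) ] = ∇_θ E_{a∼π_θ(·|s)}[R(s,a)], where the gradient on the right is with respect to all parameters jointly. -/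
/-- Auxiliary: if `g` sums to zero and `F a` only depends on the coordinates of
`a` away from `i`, then `∑ a, g (a i) * F a = 0`. -/
lemma aux_sum_zero {N : ℕ} {A : Fin N → Type*} [∀ j, Fintype (A j)] (i : Fin N)
    (g : A i → ℝ) (F : (∀ j, A j) → ℝ)
    (hg : ∑ x, g x = 0)
    (hF : ∀ a a' : ∀ j, A j, (∀ j, j ≠ i → a j = a' j) → F a = F a') :
    ∑ a : ∀ j, A j, g (a i) * F a = 0 := by
  rcases isEmpty_or_nonempty (A i) with hE | hN
  · haveI : IsEmpty (∀ j, A j) := ⟨fun a => hE.false (a i)⟩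
    simp
  · obtain ⟨x₀⟩ := hN
    set e := Equiv.piSplitAt i A with he
    have h1 : ∑ a : ∀ j, A j, g (a i) * F a
        = ∑ q : A i × (∀ j : { j // j ≠ i }, A (j : Fin N)),
            g ((e.symm q) i) * F (e.symm q) :=
      (Equiv.sum_comp e.symm fun a => g (a i) * F a).symm
    rw [h1, Fintype.sum_prod_type]
    have h2 : ∀ (x : A i) (y : ∀ j : { j // j ≠ i }, A (j : Fin N)),
        g ((e.symm (x, y)) i) * F (e.symm (x, y)) = g x * F (e.symm (x₀, y)) := by
      intro x y
      have hxi : (e.symm (x, y)) i = x := by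
        simp [he, Equiv.piSplitAt]
      have hFy : F (e.symm (x, y)) = F (e.symm (x₀, y)) := by
        apply hF
        intro j hj
        simp [he, Equiv.piSplitAt, dif_neg hj]
      rw [hxi, hFy]
    calc (∑ x : A i, ∑ y, g ((e.symm (x, y)) i) * F (e.symm (x, y)))
        = ∑ x : A i, ∑ y, g x * F (e.symm (x₀, y)) := by
          refine Finset.sum_congr rfl fun x _ => Finset.sum_congr rfl fun y _ => h2 x y
      _ = ∑ x : A i, g x * ∑ y, F (e.symm (x₀, y)) := by
          simp [Finset.mul_sum]
      _ = (∑ x : A i, g x) * ∑ y, F (e.symm (x₀, y)) := by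
          rw [Finset.sum_mul]
      _ = 0 := by rw [hg, zero_mul]

/-- The stacked expected difference-rewards update targets (one per agent)
equal the stacked components of the joint policy gradient of the expected
reward. -/
theorem diff_rewards_eq_joint_gradient {S : Type*} {N : ℕ}
    {A : Fin N → Type*} [∀ j, Fintype (A j)]
    (π : (j : Fin N) → ℝ → S → A j → ℝ) (θ : Fin N → ℝ)
    (R : S → (∀ j, A j) → ℝ) (s : S)
    (hdiff : ∀ j aj, DifferentiableAt ℝ (fun t => π j t s aj) (θ j))
    (hpos : ∀ j t aj, 0 < π j t s aj)
    (hsum : ∀ j t, ∑ aj, π j t s aj = 1) :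
    (fun i : Fin N =>
      ∑ a : ∀ j, A j, (∏ j, π j (θ j) s (a j)) *
        ((R s a - ∑ bi, π i (θ i) s bi * R s (Function.update a i bi)) *
          deriv (fun t => Real.log (π i t s (a i))) (θ i)))
    = fun i : Fin N =>
        deriv (fun t =>
          ∑ a : ∀ j, A j,
            (∏ j, π j (Function.update θ i t j) s (a j)) * R s a) (θ i) := by
  funext i
  set d : A i → ℝ := fun ai => deriv (fun t => π i t s ai) (θ i) with hd
  set P : (∀ j, A j) → ℝ := fun a => ∏ j ∈ Finset.univ.erase i, π j (θ j) s (a j) with hP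
  set B : (∀ j, A j) → ℝ :=
    fun a => ∑ bi, π i (θ i) s bi * R s (Function.update a i bi) with hB
  have hne : ∀ ai : A i, π i (θ i) s ai ≠ 0 := fun ai => (hpos i (θ i) ai).ne'
  -- the per-agent score sums to zero
  have hdsum : ∑ x : A i, d x = 0 := by
    have h1 : HasDerivAt (fun t => ∑ x : A i, π i t s x) (∑ x : A i, d x) (θ i) :=
      HasDerivAt.fun_sum fun x _ => (hdiff i x).hasDerivAt
    have h2 : (fun t => ∑ x : A i, π i t s x) = fun _ => (1 : ℝ) :=
      funext fun t => hsum i t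
    rw [h2] at h1
    exact h1.unique (hasDerivAt_const _ 1)
  -- derivative of the log-policy
  have hlog : ∀ ai : A i,
      deriv (fun t => Real.log (π i t s ai)) (θ i) = d ai / π i (θ i) s ai :=
    fun ai => ((hdiff i ai).hasDerivAt.log (hne ai)).deriv
  -- splitting the product at agent i
  have hprod : ∀ (t : ℝ) (a : ∀ j, A j),
      (∏ j, π j (Function.update θ i t j) s (a j)) = π i t s (a i) * P a := by
    intro t a
    rw [← Finset.mul_prod_erase Finset.univ _ (Finset.mem_univ i),
      Function.update_self]
    congr 1
    refine Finset.prod_congr rfl fun j hj => ?_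
    rw [Function.update_of_ne (Finset.ne_of_mem_erase hj)]
  have hprodθ : ∀ a : ∀ j, A j,
      (∏ j, π j (θ j) s (a j)) = π i (θ i) s (a i) * P a := by
    intro a
    have := hprod (θ i) a
    rwa [Function.update_eq_self] at this
  -- compute the right-hand side derivative
  have hRd : deriv (fun t =>
      ∑ a : ∀ j, A j, (∏ j, π j (Function.update θ i t j) s (a j)) * R s a) (θ i)
      = ∑ a : ∀ j, A j, d (a i) * (P a * R s a) := by
    have hfe : (fun t =>
        ∑ a : ∀ j, A j, (∏ j, π j (Function.update θ i t j) s (a j)) * R s a)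
        = fun t => ∑ a : ∀ j, A j, π i t s (a i) * (P a * R s a) := by
      funext t
      refine Finset.sum_congr rfl fun a _ => ?_
      rw [hprod t a, mul_assoc]
    rw [hfe]
    have h1 : HasDerivAt (fun t => ∑ a : ∀ j, A j, π i t s (a i) * (P a * R s a))
        (∑ a : ∀ j, A j, d (a i) * (P a * R s a)) (θ i) :=
      HasDerivAt.fun_sum fun a _ => ((hdiff i (a i)).hasDerivAt.mul_const _)
    exact h1.deriv
  rw [hRd]
  -- rewrite each term on the left-hand side
  have hterm : ∀ a : ∀ j, A j,
      (∏ j, π j (θ j) s (a j)) *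
        ((R s a - ∑ bi, π i (θ i) s bi * R s (Function.update a i bi)) *
          deriv (fun t => Real.log (π i t s (a i))) (θ i))
      = d (a i) * (P a * R s a) - d (a i) * (P a * B a) := by
    intro a
    rw [hlog (a i), hprodθ a]
    have h0 := hne (a i)
    show π i (θ i) s (a i) * P a * ((R s a - B a) * (d (a i) / π i (θ i) s (a i)))
      = d (a i) * (P a * R s a) - d (a i) * (P a * B a)
    field_simp
  rw [Finset.sum_congr rfl fun a _ => hterm a, Finset.sum_sub_distrib]
  have hz : ∑ a : ∀ j, A j, d (a i) * (P a * B a) = 0 := by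
    refine aux_sum_zero i d (fun a => P a * B a) hdsum ?_
    intro a a' hag
    have hPa : P a = P a' := by
      refine Finset.prod_congr rfl fun j hj => ?_
      rw [hag j (Finset.ne_of_mem_erase hj)]
    have hBa : B a = B a' := by
      refine Finset.sum_congr rfl fun bi _ => ?_
      have : Function.update a i bi = Function.update a' i bi := by
        funext j
        by_cases hji : j = i
        · subst hji; simp
        · simp [Function.update_of_ne hji, hag j hji]
      rw [this]
    show P a * B a = P a' * B a'
    rw [hPa, hBa]
  rw [hz, sub_zero]
end
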